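/- Let w ∈ αΣ* ∩ Σ*‾α, let u ∈ P_α(w) and ‾v ∈ S_‾α(w). If v ∈ (P_α(uα))* and u ∈ (‾(S_‾α(‾α‾v)))*, then (P_α(uα))* = (‾(S_‾α(‾α‾v)))*. -/
import Mathlib


open List

namespace Hairpin

variable {S : Type} [DecidableEq S]

/-- Antimorphic extension of an involution to words. -/
def comp (bar : S → S) (w : List S) : List S := (w.map bar).reverse

/-- Right hairpin completion w.r.t. primer `a`. -/
def RH (bar : S → S) (a w z : List S) : Prop :=
  ∃ γ β : List S, w = γ ++ a ++ β ++ comp bar a ∧ z = w ++ comp bar γ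

/-- Left hairpin completion w.r.t. primer `a`. -/
def LH (bar : S → S) (a w z : List S) : Prop :=
  ∃ γ β : List S, w = a ++ β ++ comp bar a ++ comp bar γ ∧ z = γ ++ w

/-- One hairpin completion step. -/
def HC (bar : S → S) (a w z : List S) : Prop := RH bar a w z ∨ LH bar a w z

/-- Iterated hairpin completion `H*_α(w)`. -/
def HCstar (bar : S → S) (a w : List S) : Set (List S) :=
  { z | Relation.ReflTransGen (HC bar a) w z }

/-- `w` is non-`a`-crossing: every occurrence of `a` starts no later than
every occurrence of `comp bar a`. -/
def NonCrossing (bar : S → S) (a w : List S) : Prop :=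
  ∀ i j : ℕ, a <+: w.drop i → comp bar a <+: w.drop j → i ≤ j

/-- The set of `a`-prefixes of `w`. -/
def Pa (a w : List S) : Set (List S) := { u | u ++ a <+: w }

/-- The set of `‾a`-suffixes of `w` (the elements are the words `‾v`). -/
def Sa (bar : S → S) (a w : List S) : Set (List S) :=
  { x | comp bar a ++ x <:+ w }

/-- The set of complements of `‾a`-suffixes of `w`, i.e. `‾(S_‾α(w))`. -/
def barSa (bar : S → S) (a w : List S) : Set (List S) :=
  { v | comp bar a ++ comp bar v <:+ w }

/-- Kleene star of a set of words: all finite concatenations. -/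
def star (X : Set (List S)) : Set (List S) :=
  { x | ∃ l : List (List S), (∀ y ∈ l, y ∈ X) ∧ x = l.flatten }

/-- `ind_α(x)`: the number of occurrences of `a` in `x ++ a` other than the
suffix occurrence, i.e. the number of positions `i < |x|` where `a` occurs. -/
def inda (a x : List S) : ℕ :=
  ((Finset.range x.length).filter (fun i => a <+: (x ++ a).drop i)).card

set_option linter.unusedSectionVars false

lemma comp_append (bar : S → S) (x y : List S) :
    comp bar (x ++ y) = comp bar y ++ comp bar x := by
  simp [comp]

lemma comp_suffix_iff (bar : S → S) (hbar : Function.Involutive bar) (x y : List S) :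
    comp bar x <:+ comp bar y ↔ x <+: y := by
  constructor
  · intro h
    have h1 : x.map bar <+: y.map bar := List.reverse_suffix.mp h
    have h2 := h1.map bar
    simpa [List.map_map, hbar.comp_self] using h2
  · intro h
    exact List.reverse_suffix.mpr (h.map bar)

lemma barSa_eq (bar : S → S) (hbar : Function.Involutive bar) (a v : List S) :
    barSa bar a (comp bar a ++ comp bar v) = Pa a (v ++ a) := by
  ext q
  show comp bar a ++ comp bar q <:+ comp bar a ++ comp bar v ↔ q ++ a <+: v ++ a
  rw [← comp_append, ← comp_append, comp_suffix_iff bar hbar]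

lemma nil_mem_star (X : Set (List S)) : ([] : List S) ∈ star X := ⟨[], by simp, rfl⟩

lemma mem_star_of_mem {X : Set (List S)} {q : List S} (h : q ∈ X) : q ∈ star X :=
  ⟨[q], by simpa using h, by simp⟩

lemma cons_mem_star {X : Set (List S)} {p x : List S} (hp : p ∈ X) (hx : x ∈ star X) :
    p ++ x ∈ star X := by
  obtain ⟨l, hl, rfl⟩ := hx
  exact ⟨p :: l, by simpa using ⟨hp, hl⟩, by simp⟩

lemma append_mem_star {X : Set (List S)} {x y : List S}
    (hx : x ∈ star X) (hy : y ∈ star X) : x ++ y ∈ star X := by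
  obtain ⟨l1, h1, rfl⟩ := hx
  obtain ⟨l2, h2, rfl⟩ := hy
  refine ⟨l1 ++ l2, ?_, by simp⟩
  intro z hz
  rcases List.mem_append.mp hz with h | h
  exacts [h1 z h, h2 z h]

lemma star_trans {X Y : Set (List S)} (h : ∀ p ∈ X, p ∈ star Y) :
    ∀ x ∈ star X, x ∈ star Y := by
  rintro x ⟨l, hl, rfl⟩
  induction l with
  | nil => exact nil_mem_star _
  | cons p l ih =>
    simp only [List.flatten_cons]
    exact append_mem_star (h p (hl p (by simp)))
      (ih fun y hy => hl y (List.mem_cons_of_mem _ hy))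

lemma lemB {a v : List S} (ha : a <+: v ++ a) :
    ∀ l : List (List S), (∀ y ∈ l, y ∈ Pa a (v ++ a)) →
    ∀ c : List S, c <+: l.flatten ++ a → c.length ≤ a.length → c <+: a := by
  intro l
  induction l with
  | nil =>
    intro _ c hc _
    simpa using hc
  | cons p l ih =>
    intro hmem c hc hlen
    have hp : p ++ a <+: v ++ a := hmem p (by simp)
    have hc' : c <+: p ++ (l.flatten ++ a) := by simpa [List.append_assoc] using hc
    rcases le_or_gt c.length p.length with h | h
    · have hcp : c <+: p := List.prefix_of_prefix_length_le hc' (p.prefix_append _) h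
      exact List.prefix_of_prefix_length_le
        (hcp.trans ((p.prefix_append a).trans hp)) ha hlen
    · have hpc : p <+: c := List.prefix_of_prefix_length_le (p.prefix_append _) hc' h.le
      obtain ⟨c', rfl⟩ := hpc
      have hcf : c' <+: l.flatten ++ a :=
        (List.prefix_append_right_inj p).mp hc'
      have hc'a : c' <+: a := ih (fun y hy => hmem y (List.mem_cons_of_mem _ hy)) c' hcf
        (by simp at hlen ⊢; omega)
      exact List.prefix_of_prefix_length_le
        ((((List.prefix_append_right_inj p).mpr hc'a).trans hp)) ha hlen

lemma lemA {a v : List S} (ha : a <+: v ++ a) :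
    ∀ l : List (List S), (∀ y ∈ l, y ∈ Pa a (v ++ a)) →
    ∀ q : List S, q ++ a <+: l.flatten ++ a → q ∈ star (Pa a (v ++ a)) := by
  intro l
  induction l with
  | nil =>
    intro _ q hq
    simp only [List.flatten_nil, List.nil_append] at hq
    have hlen := hq.length_le
    simp only [List.length_append] at hlen
    have : q = [] := List.eq_nil_of_length_eq_zero (by omega)
    subst this
    exact nil_mem_star _
  | cons p l ih =>
    intro hmem q hq
    have hp : p ++ a <+: v ++ a := hmem p (by simp)
    have hq' : q ++ a <+: p ++ (l.flatten ++ a) := by simpa [List.append_assoc] using hq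
    rcases le_or_gt p.length q.length with h | h
    · have hpq : p <+: q := List.prefix_of_prefix_length_le (p.prefix_append _)
        ((q.prefix_append a).trans hq') h
      obtain ⟨q', rfl⟩ := hpq
      have hq'' : q' ++ a <+: l.flatten ++ a := by
        rw [List.append_assoc] at hq'
        exact (List.prefix_append_right_inj p).mp hq'
      exact cons_mem_star hp (ih (fun y hy => hmem y (List.mem_cons_of_mem _ hy)) q' hq'')
    · have hqp : q <+: p := List.prefix_of_prefix_length_le
        ((q.prefix_append a).trans hq') (p.prefix_append _) h.le
      obtain ⟨t, rfl⟩ := hqp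
      have hat : a <+: t ++ (l.flatten ++ a) := by
        rw [List.append_assoc] at hq'
        exact (List.prefix_append_right_inj q).mp hq'
      have key : a <+: t ++ a := by
        rcases le_or_gt a.length t.length with h2 | h2
        · exact (List.prefix_of_prefix_length_le hat (t.prefix_append _) h2).trans
            (t.prefix_append a)
        · have hta : t <+: a := List.prefix_of_prefix_length_le (t.prefix_append _) hat h2.le
          obtain ⟨s, hs⟩ := hta
          have hsf : s <+: l.flatten ++ a := by
            nth_rewrite 1 [← hs] at hat
            exact (List.prefix_append_right_inj t).mp hat
          have hsa : s <+: a := lemB ha l (fun y hy => hmem y (List.mem_cons_of_mem _ hy)) s hsf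
            (by rw [← hs]; simp)
          calc a = t ++ s := hs.symm
          _ <+: t ++ a := (List.prefix_append_right_inj t).mpr hsa
      have : q ++ a <+: v ++ a := by
        calc q ++ a <+: q ++ (t ++ a) := (List.prefix_append_right_inj q).mpr key
        _ = (q ++ t) ++ a := by rw [List.append_assoc]
        _ <+: v ++ a := hp
      exact mem_star_of_mem this

theorem stmt8 (bar : S → S) (hbar : Function.Involutive bar)
    (a w u v : List S) (hp : a <+: w) (hs : comp bar a <:+ w)
    (hu : u ∈ Pa a w) (hv : v ∈ barSa bar a w)
    (h1 : v ∈ star (Pa a (u ++ a)))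
    (h2 : u ∈ star (barSa bar a (comp bar a ++ comp bar v))) :
    star (Pa a (u ++ a)) = star (barSa bar a (comp bar a ++ comp bar v)) := by
  rw [barSa_eq bar hbar] at h2 ⊢
  have hau : a <+: u ++ a := List.prefix_of_prefix_length_le hp hu (by simp)
  have hav : a <+: v ++ a := by
    have hv' : comp bar (v ++ a) <:+ w := by rw [comp_append]; exact hv
    have : comp bar a <:+ comp bar (v ++ a) :=
      List.suffix_of_suffix_length_le hs hv' (by simp [comp])
    exact (comp_suffix_iff bar hbar _ _).mp this
  apply Set.eq_of_subset_of_subset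
  · refine star_trans ?_
    intro p hpP
    obtain ⟨l, hl, hufl⟩ := h2
    refine lemA hav l hl p ?_
    rw [← hufl]
    exact hpP
  · refine star_trans ?_
    intro q hqQ
    obtain ⟨l, hl, hvfl⟩ := h1
    refine lemA hau l hl q ?_
    rw [← hvfl]
    exact hqQ


end Hairpin
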